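/- arXiv:1406.1627 — 3 statements merged into one kernel-verified Lean document; each statement's English description precedes it below -/
import Mathlib

section
/- Let h ∈ H¹(0,1) with ∫₀¹ h(t)² dt = 1. Then ∫₀¹ h(t)⁴ dt ≤ 1 + 4 ∫₀¹ |h'(t)|² dt, with equality when h ≡ 1. -/
open MeasureTheory intervalIntegral

/-- For `h ∈ H¹(0,1)` with `∫₀¹ h² = 1` one has `∫₀¹ h⁴ ≤ 1 + 4∫₀¹ |h'|²`, with
equality when `h ≡ 1`. -/
theorem h4_le_one_add_four_deriv (h h' : ℝ → ℝ)
    (hderiv : ∀ t ∈ Set.Icc (0:ℝ) 1, HasDerivAt h (h' t) t)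
    (hint : IntervalIntegrable (fun t => h' t ^ 2) volume 0 1)
    (hnorm : (∫ t in (0:ℝ)..1, h t ^ 2) = 1) :
    (∫ t in (0:ℝ)..1, h t ^ 4) ≤ 1 + 4 * ∫ t in (0:ℝ)..1, h' t ^ 2 ∧
    ((h = fun _ => 1) → (h' = fun _ => 0) →
      (∫ t in (0:ℝ)..1, h t ^ 4) = 1 + 4 * ∫ t in (0:ℝ)..1, h' t ^ 2) := by
  have hu : Set.uIcc (0:ℝ) 1 = Set.Icc (0:ℝ) 1 := Set.uIcc_of_le zero_le_one
  set B := ∫ t in (0:ℝ)..1, h' t ^ 2 with hBdef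
  have hcont : ContinuousOn h (Set.Icc (0:ℝ) 1) := fun t ht =>
    (hderiv t ht).continuousAt.continuousWithinAt
  have hcont2 : ContinuousOn (fun t => h t ^ 2) (Set.Icc (0:ℝ) 1) := hcont.pow 2
  have ih2 : IntervalIntegrable (fun t => h t ^ 2) volume 0 1 :=
    ContinuousOn.intervalIntegrable (by rw [hu]; exact hcont2)
  have ih4 : IntervalIntegrable (fun t => h t ^ 4) volume 0 1 :=
    ContinuousOn.intervalIntegrable (by rw [hu]; exact hcont.pow 4)
  -- measurability of h'
  have hmeas : AEStronglyMeasurable h' (volume.restrict (Set.uIoc (0:ℝ) 1)) := by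
    apply (measurable_deriv h).aestronglyMeasurable.restrict.congr
    rw [Set.uIoc_of_le zero_le_one]
    filter_upwards [ae_restrict_mem measurableSet_Ioc] with t ht
    exact (hderiv t (Set.Ioc_subset_Icc_self ht)).deriv
  -- integrability of h * h'
  have ihh' : IntervalIntegrable (fun t => h t * h' t) volume 0 1 := by
    apply (ih2.add hint).mono_fun
    · exact (((hcont.mono Set.Ioc_subset_Icc_self).aestronglyMeasurable
        measurableSet_Ioc).congr (by rfl)).mono_measure
        (by rw [Set.uIoc_of_le zero_le_one]) |>.mul hmeas
    · filter_upwards with t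
      simp only [Real.norm_eq_abs]
      have h1 : |h t * h' t| = |h t| * |h' t| := abs_mul _ _
      have h2 : (0:ℝ) ≤ h t ^ 2 + h' t ^ 2 := by positivity
      rw [h1, abs_of_nonneg h2]
      nlinarith [sq_nonneg (|h t| - |h' t|), sq_abs (h t), sq_abs (h' t)]
  have ihabs : IntervalIntegrable (fun t => |h t * h' t|) volume 0 1 := ihh'.abs
  set C := ∫ t in (0:ℝ)..1, |h t * h' t| with hCdef
  have hC0 : 0 ≤ C := intervalIntegral.integral_nonneg zero_le_one fun u _ => abs_nonneg _
  have hB0 : 0 ≤ B := intervalIntegral.integral_nonneg zero_le_one fun u _ => sq_nonneg _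
  -- Cauchy-Schwarz : C ^ 2 ≤ B
  have hCS : C ^ 2 ≤ B := by
    have expand : ∀ t : ℝ, (C * |h t| - |h' t|) ^ 2
        = C ^ 2 * h t ^ 2 - 2 * C * |h t * h' t| + h' t ^ 2 := by
      intro t
      calc (C * |h t| - |h' t|) ^ 2
          = C ^ 2 * |h t| ^ 2 - 2 * C * (|h t| * |h' t|) + |h' t| ^ 2 := by ring
        _ = C ^ 2 * h t ^ 2 - 2 * C * |h t * h' t| + h' t ^ 2 := by
            rw [sq_abs, sq_abs, ← abs_mul]
    have i1 : IntervalIntegrable (fun t => C ^ 2 * h t ^ 2) volume 0 1 := ih2.const_mul _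
    have i2 : IntervalIntegrable (fun t => 2 * C * |h t * h' t|) volume 0 1 := ihabs.const_mul _
    have hnn : 0 ≤ ∫ t in (0:ℝ)..1, (C * |h t| - |h' t|) ^ 2 :=
      intervalIntegral.integral_nonneg zero_le_one fun u _ => sq_nonneg _
    have heq : (∫ t in (0:ℝ)..1, (C * |h t| - |h' t|) ^ 2)
        = C ^ 2 * 1 - 2 * C * C + B := by
      simp only [expand]
      rw [intervalIntegral.integral_add (i1.sub i2) hint,
        intervalIntegral.integral_sub i1 i2, intervalIntegral.integral_const_mul,
        intervalIntegral.integral_const_mul, hnorm, hCdef]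
    rw [heq] at hnn
    nlinarith
  -- find t₀ with h t₀ ^ 2 = 1
  have hne : (Set.Icc (0:ℝ) 1).Nonempty := Set.nonempty_Icc.2 zero_le_one
  obtain ⟨p, hpI, hpmin⟩ := isCompact_Icc.exists_isMinOn hne hcont2
  obtain ⟨q, hqI, hqmax⟩ := isCompact_Icc.exists_isMaxOn hne hcont2
  have hle1 : h p ^ 2 ≤ 1 := by
    have : (∫ _t in (0:ℝ)..1, h p ^ 2) ≤ ∫ t in (0:ℝ)..1, h t ^ 2 :=
      intervalIntegral.integral_mono_on zero_le_one intervalIntegrable_const ih2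
        fun x hx => hpmin hx
    simpa [hnorm] using this
  have hge1 : 1 ≤ h q ^ 2 := by
    have : (∫ t in (0:ℝ)..1, h t ^ 2) ≤ ∫ _t in (0:ℝ)..1, h q ^ 2 :=
      intervalIntegral.integral_mono_on zero_le_one ih2 intervalIntegrable_const
        fun x hx => hqmax hx
    simpa [hnorm] using this
  have hsubab : Set.uIcc p q ⊆ Set.Icc (0:ℝ) 1 := Set.uIcc_subset_Icc hpI hqI
  have h1mem : (1:ℝ) ∈ (fun t => h t ^ 2) '' Set.uIcc p q := by
    apply intermediate_value_uIcc (hcont2.mono hsubab)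
    exact Set.mem_uIcc.2 (Or.inl ⟨hle1, hge1⟩)
  obtain ⟨t₀, ht₀m, ht₀⟩ := h1mem
  have ht₀I : t₀ ∈ Set.Icc (0:ℝ) 1 := hsubab ht₀m
  -- integrability of 2 * h * h'
  have ihg : IntervalIntegrable (fun s => 2 * h s * h' s) volume 0 1 := by
    have := ihh'.const_mul 2
    simpa [mul_assoc] using this
  have h2C : (∫ s in (0:ℝ)..1, |2 * h s * h' s|) = 2 * C := by
    have : ∀ s : ℝ, |2 * h s * h' s| = 2 * |h s * h' s| := by
      intro s; rw [mul_assoc, abs_mul]; norm_num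
    simp only [this]
    rw [intervalIntegral.integral_const_mul, hCdef]
  -- key pointwise bound
  have key : ∀ t ∈ Set.Icc (0:ℝ) 1, (h t ^ 2 - 1) ^ 2 ≤ 4 * B := by
    intro t ht
    have hsub : Set.uIcc t₀ t ⊆ Set.Icc (0:ℝ) 1 := Set.uIcc_subset_Icc ht₀I ht
    have ftc : (∫ s in t₀..t, 2 * h s * h' s) = h t ^ 2 - h t₀ ^ 2 := by
      apply intervalIntegral.integral_eq_sub_of_hasDerivAt
      · intro s hs
        have hd := (hderiv s (hsub hs)).pow 2
        have : ((2:ℕ):ℝ) * h s ^ (2-1) * h' s = 2 * h s * h' s := by norm_num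
        rwa [this] at hd
      · exact ihg.mono_set (by rw [hu]; exact hsub)
    have hsubI : Set.uIoc t₀ t ⊆ Set.uIoc (0:ℝ) 1 := by
      rw [Set.uIoc_of_le zero_le_one, Set.uIoc]
      exact Set.Ioc_subset_Ioc (le_min ht₀I.1 ht.1) (max_le ht₀I.2 ht.2)
    have habs : |h t ^ 2 - 1| ≤ 2 * C := by
      have b1 : |∫ s in t₀..t, 2 * h s * h' s| ≤ abs (∫ s in t₀..t, |2 * h s * h' s|) := by
        have := intervalIntegral.norm_integral_le_abs_integral_norm
            (f := fun s => 2 * h s * h' s) (μ := volume) (a := t₀) (b := t)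
        simpa only [Real.norm_eq_abs] using this
      have b2 : abs (∫ s in t₀..t, |2 * h s * h' s|) ≤ abs (∫ s in (0:ℝ)..1, |2 * h s * h' s|) :=
        intervalIntegral.abs_integral_mono_interval hsubI
          (Filter.Eventually.of_forall fun s => abs_nonneg _) ihg.abs
      have b3 : abs (∫ s in (0:ℝ)..1, |2 * h s * h' s|) = 2 * C := by
        rw [h2C, abs_of_nonneg (by linarith)]
      calc |h t ^ 2 - 1| = |∫ s in t₀..t, 2 * h s * h' s| := by rw [ftc]; simp only [ht₀]
        _ ≤ abs (∫ s in t₀..t, |2 * h s * h' s|) := b1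
        _ ≤ abs (∫ s in (0:ℝ)..1, |2 * h s * h' s|) := b2
        _ = 2 * C := b3
    have : (h t ^ 2 - 1) ^ 2 ≤ (2 * C) ^ 2 := by
      rw [← sq_abs]
      exact pow_le_pow_left₀ (abs_nonneg _) habs 2
    nlinarith
  -- integrate the key bound
  have isq : IntervalIntegrable (fun t => (h t ^ 2 - 1) ^ 2) volume 0 1 :=
    ContinuousOn.intervalIntegrable (by rw [hu]; exact (hcont2.sub continuousOn_const).pow 2)
  have main1 : (∫ t in (0:ℝ)..1, (h t ^ 2 - 1) ^ 2) ≤ 4 * B := by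
    have := intervalIntegral.integral_mono_on zero_le_one isq
      (_root_.intervalIntegrable_const (c := 4 * B)) key
    simpa using this
  have main2 : (∫ t in (0:ℝ)..1, (h t ^ 2 - 1) ^ 2)
      = (∫ t in (0:ℝ)..1, h t ^ 4) - 2 * 1 + 1 := by
    have e : ∀ t : ℝ, (h t ^ 2 - 1) ^ 2 = h t ^ 4 - 2 * h t ^ 2 + 1 := fun t => by ring
    simp only [e]
    rw [intervalIntegral.integral_add (ih4.sub (ih2.const_mul 2)) intervalIntegrable_const,
      intervalIntegral.integral_sub ih4 (ih2.const_mul 2),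
      intervalIntegral.integral_const_mul, hnorm]
    norm_num
  constructor
  · linarith [main1, main2.symm.trans_le main1]
  · rintro rfl rfl
    simp [hBdef]
end

section
/- Let c ≥ 2√2 π and let h : (0,1) → [0,∞) be measurable with ∫₀¹ h² dt = 1. Then ¼ ∫₀¹ h⁴ dt + (π²/c²) (∫₀¹ h^{2/3} dt)³ ≥ ¼ + π²/c², with equality for h ≡ 1. -/
open MeasureTheory Set
open scoped ENNReal

/-- For `c ≥ 2√2 π` and measurable `h ≥ 0` on `(0,1)` with `∫₀¹ h² = 1`:
`¼ ∫₀¹ h⁴ + (π²/c²)(∫₀¹ h^{2/3})³ ≥ ¼ + π²/c²`, with equality for `h ≡ 1`. -/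
theorem quarter_h4_plus_holder_term_ge (c : ℝ) (hc : 2 * Real.sqrt 2 * Real.pi ≤ c)
    (h : ℝ → ℝ) (hmeas : Measurable h) (hpos : ∀ t, 0 ≤ h t)
    (hnorm : (∫⁻ t in Set.Ioo (0:ℝ) 1, ENNReal.ofReal (h t ^ 2)) = 1) :
    ENNReal.ofReal (1/4 + Real.pi ^ 2 / c ^ 2) ≤
      ENNReal.ofReal (1/4) * (∫⁻ t in Set.Ioo (0:ℝ) 1, ENNReal.ofReal (h t ^ 4))
      + ENNReal.ofReal (Real.pi ^ 2 / c ^ 2) *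
        (∫⁻ t in Set.Ioo (0:ℝ) 1, ENNReal.ofReal (h t ^ ((2:ℝ)/3))) ^ 3 ∧
    ((h = fun _ => 1) →
      ENNReal.ofReal (1/4 + Real.pi ^ 2 / c ^ 2) =
        ENNReal.ofReal (1/4) * (∫⁻ t in Set.Ioo (0:ℝ) 1, ENNReal.ofReal (h t ^ 4))
        + ENNReal.ofReal (Real.pi ^ 2 / c ^ 2) *
          (∫⁻ t in Set.Ioo (0:ℝ) 1, ENNReal.ofReal (h t ^ ((2:ℝ)/3))) ^ 3) := by
  have hπ : 0 < Real.pi := Real.pi_pos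
  have hc0 : 0 < c := lt_of_lt_of_le (by positivity) hc
  have hk0 : 0 < Real.pi ^ 2 / c ^ 2 := by positivity
  have hk8 : Real.pi ^ 2 / c ^ 2 ≤ 1/8 := by
    rw [div_le_iff₀ (by positivity)]
    have h2 : (2 * Real.sqrt 2 * Real.pi) ^ 2 ≤ c ^ 2 := by
      apply pow_le_pow_left₀ (by positivity) hc
    have hs : Real.sqrt 2 ^ 2 = 2 := Real.sq_sqrt (by norm_num)
    nlinarith [Real.pi_pos]
  set k := Real.pi ^ 2 / c ^ 2 with hkdef
  set F : ℝ → ℝ≥0∞ := fun t => ENNReal.ofReal (h t) with hF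
  have hFmeas : Measurable F := hmeas.ennreal_ofReal
  have hvol : volume (Set.Ioo (0:ℝ) 1) = 1 := by
    rw [Real.volume_Ioo]; norm_num
  have key : ∀ (n:ℕ) (x:ℝ), 0 ≤ x → ENNReal.ofReal (x^n) = ENNReal.ofReal x ^ (n:ℝ) := by
    intro n x hx
    rw [ENNReal.ofReal_pow hx, ← ENNReal.rpow_natCast]
  -- rewrite integrals in terms of F rpow
  have hI2 : (∫⁻ t in Set.Ioo (0:ℝ) 1, ENNReal.ofReal (h t ^ 2))
      = ∫⁻ t in Set.Ioo (0:ℝ) 1, F t ^ (2:ℝ) := by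
    refine lintegral_congr fun t => ?_
    have := key 2 (h t) (hpos t); norm_num at this ⊢; rw [this]
  have hI4 : (∫⁻ t in Set.Ioo (0:ℝ) 1, ENNReal.ofReal (h t ^ 4))
      = ∫⁻ t in Set.Ioo (0:ℝ) 1, F t ^ (4:ℝ) := by
    refine lintegral_congr fun t => ?_
    have := key 4 (h t) (hpos t); norm_num at this ⊢; rw [this]
  have hI23 : (∫⁻ t in Set.Ioo (0:ℝ) 1, ENNReal.ofReal (h t ^ ((2:ℝ)/3)))
      = ∫⁻ t in Set.Ioo (0:ℝ) 1, F t ^ ((2:ℝ)/3) := by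
    refine lintegral_congr fun t => ?_
    rw [hF, ← ENNReal.ofReal_rpow_of_nonneg (hpos t) (by norm_num)]
  set A := ∫⁻ t in Set.Ioo (0:ℝ) 1, F t ^ (4:ℝ) with hA
  set B := ∫⁻ t in Set.Ioo (0:ℝ) 1, F t ^ ((2:ℝ)/3) with hB
  have hnorm' : (∫⁻ t in Set.Ioo (0:ℝ) 1, F t ^ (2:ℝ)) = 1 := by rw [← hI2, hnorm]
  rw [hI4, hI23]
  constructor
  · -- main inequality
    -- Cauchy-Schwarz: 1 ≤ A^{1/2}
    have hCS : (1:ℝ≥0∞) ≤ A ^ (1/2:ℝ) := by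
      have := ENNReal.lintegral_mul_le_Lp_mul_Lq (volume.restrict (Set.Ioo (0:ℝ) 1))
        (by constructor <;> norm_num : Real.HolderConjugate 2 2) (f := fun t => F t ^ (2:ℝ)) (g := fun _ => 1)
        ((hFmeas.pow_const _).aemeasurable) aemeasurable_const
      simp only [Pi.mul_apply, mul_one, ENNReal.one_rpow, lintegral_const,
        Measure.restrict_apply MeasurableSet.univ, Set.univ_inter, hvol] at this
      rw [hnorm'] at this
      calc (1:ℝ≥0∞) ≤ (∫⁻ t in Set.Ioo (0:ℝ) 1, (F t ^ (2:ℝ)) ^ (2:ℝ)) ^ (1/2:ℝ) :=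
            this
        _ = A ^ (1/2:ℝ) := by
            rw [hA]
            congr 1
            refine lintegral_congr fun t => ?_
            rw [← ENNReal.rpow_mul]; norm_num
    have hA1 : (1:ℝ≥0∞) ≤ A := by
      have := ENNReal.rpow_le_rpow hCS (by norm_num : (0:ℝ) ≤ 2)
      rwa [ENNReal.one_rpow, ← ENNReal.rpow_mul, one_div, inv_mul_cancel₀ (by norm_num),
        ENNReal.rpow_one] at this
    -- Hölder: 1 ≤ A^{2/5} B^{3/5}
    have hHold : (1:ℝ≥0∞) ≤ A ^ (2/5:ℝ) * B ^ (3/5:ℝ) := by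
      have hpq : Real.HolderConjugate (5/2) (5/3) := by
        constructor <;> norm_num
      have := ENNReal.lintegral_mul_le_Lp_mul_Lq (volume.restrict (Set.Ioo (0:ℝ) 1))
        hpq (f := fun t => F t ^ (8/5:ℝ)) (g := fun t => F t ^ (2/5:ℝ))
        ((hFmeas.pow_const _).aemeasurable) ((hFmeas.pow_const _).aemeasurable)
      have heq1 : (∫⁻ t in Set.Ioo (0:ℝ) 1, ((fun t => F t ^ (8/5:ℝ)) * fun t => F t ^ (2/5:ℝ)) t)
          = 1 := by
        rw [← hnorm']
        refine lintegral_congr fun t => ?_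
        simp only [Pi.mul_apply]
        rw [← ENNReal.rpow_add_of_nonneg _ _ (by norm_num) (by norm_num)]
        norm_num
      have heq2 : (∫⁻ t in Set.Ioo (0:ℝ) 1, (F t ^ (8/5:ℝ)) ^ (5/2:ℝ)) = A := by
        rw [hA]; refine lintegral_congr fun t => ?_
        rw [← ENNReal.rpow_mul]; norm_num
      have heq3 : (∫⁻ t in Set.Ioo (0:ℝ) 1, (F t ^ (2/5:ℝ)) ^ (5/3:ℝ)) = B := by
        rw [hB]; refine lintegral_congr fun t => ?_
        rw [← ENNReal.rpow_mul]; norm_num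
      rw [heq1, heq2, heq3] at this
      convert this using 2 <;> norm_num
    by_cases hAtop : A = ⊤
    · rw [hAtop, ENNReal.mul_top (by simp)]
      exact le_top
    by_cases hBtop : B = ⊤
    · rw [hBtop]
      rw [ENNReal.top_pow (by norm_num), ENNReal.mul_top (by simp [ENNReal.ofReal_eq_zero]; linarith)]
      simp
    -- finite case
    have hA2B3 : (1:ℝ≥0∞) ≤ A ^ 2 * B ^ 3 := by
      have := ENNReal.rpow_le_rpow hHold (by norm_num : (0:ℝ) ≤ 5)
      rw [ENNReal.one_rpow, ENNReal.mul_rpow_of_nonneg _ _ (by norm_num),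
        ← ENNReal.rpow_mul, ← ENNReal.rpow_mul] at this
      norm_num at this
      exact this
    set a := A.toReal with ha
    set b := B.toReal with hb
    have haA : A = ENNReal.ofReal a := (ENNReal.ofReal_toReal hAtop).symm
    have hbB : B = ENNReal.ofReal b := (ENNReal.ofReal_toReal hBtop).symm
    have ha0 : 0 ≤ a := ENNReal.toReal_nonneg
    have hb0 : 0 ≤ b := ENNReal.toReal_nonneg
    have ha1 : 1 ≤ a := by
      rw [haA] at hA1
      exact (ENNReal.one_le_ofReal).mp hA1
    have hab : 1 ≤ a ^ 2 * b ^ 3 := by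
      rw [haA, hbB, ← ENNReal.ofReal_pow ha0, ← ENNReal.ofReal_pow hb0,
        ← ENNReal.ofReal_mul (by positivity)] at hA2B3
      exact (ENNReal.one_le_ofReal).mp hA2B3
    rw [haA, hbB, ← ENNReal.ofReal_pow hb0, ← ENNReal.ofReal_mul (by norm_num),
      ← ENNReal.ofReal_mul (le_of_lt hk0), ← ENNReal.ofReal_add (by positivity) (by positivity)]
    apply ENNReal.ofReal_le_ofReal
    nlinarith [mul_nonneg (mul_nonneg hk0.le (sub_nonneg.mpr ha1)) (sub_nonneg.mpr ha1),
      mul_nonneg (sub_nonneg.mpr ha1) (sub_nonneg.mpr ha1), sq_nonneg (a-1),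
      mul_nonneg hk0.le (sub_nonneg.mpr hab), mul_nonneg (mul_nonneg hk0.le hb0) hb0]
  · -- equality case
    intro heq
    subst heq
    have : F = fun _ => 1 := by
      funext t; simp [hF]
    rw [hA, hB, this]
    simp only [ENNReal.one_rpow, lintegral_const, Measure.restrict_apply MeasurableSet.univ,
      Set.univ_inter, hvol, mul_one, one_pow]
    rw [ENNReal.ofReal_add (by norm_num) hk0.le]
end

section
/- Let w : D → [0,∞) be integrable on D ⊂ ℝ^d, let r > 0, c > 0 and suppose that for every x ∈ D with B_r(x) ⊂ D: if the average of w on B_r(x) is ≤ cr then w ≡ 0 on B_{r/4}(x). Then the set {x ∈ D : dist(x, ∂D) > 2r, w(x) > 0 at some Lebesgue point} can be covered by N balls of radius 2r, where N is the largest integer with N ≤ (c ω_d r^{d+1})^{-1} ∫_D w dx and ω_d = |B_1|. -/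
open MeasureTheory Set

/-- Covering argument for shape subsolutions: let `w ≥ 0` be integrable on an open
`D ⊆ ℝ^d` and suppose the density estimate holds: for every ball `B_r(x) ⊆ D`, if the
average of `w` on `B_r(x)` is at most `c·r` then `w ≡ 0` on `B_{r/4}(x)`. Then the set
`{x ∈ D : dist(x,∂D) > 2r, w(x) > 0}` can be covered by `N` balls of radius `2r`, where
`N ≤ (c ω_d r^{d+1})⁻¹ ∫_D w` and `ω_d = |B₁|`. -/
theorem covering_of_density_estimate (d : ℕ) (hd : 0 < d)
    (D : Set (EuclideanSpace ℝ (Fin d))) (hDopen : IsOpen D)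
    (w : EuclideanSpace ℝ (Fin d) → ℝ) (hw : ∀ x, 0 ≤ w x)
    (hint : IntegrableOn w D)
    (r c : ℝ) (hr : 0 < r) (hc : 0 < c)
    (hdens : ∀ x ∈ D, Metric.ball x r ⊆ D →
      (∫ y in Metric.ball x r, w y) ≤ c * r * (volume (Metric.ball x r)).toReal →
      ∀ y ∈ Metric.ball x (r / 4), w y = 0) :
    ∃ T : Finset (EuclideanSpace ℝ (Fin d)),
      (T.card : ℝ) ≤ (∫ x in D, w x) /
        (c * (volume (Metric.ball (0 : EuclideanSpace ℝ (Fin d)) 1)).toReal * r ^ (d + 1)) ∧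
      {x | x ∈ D ∧ 2 * r < Metric.infDist x Dᶜ ∧ 0 < w x} ⊆
        ⋃ y ∈ T, Metric.ball y (2 * r) := by
  classical
  haveI : Nonempty (Fin d) := Fin.pos_iff_nonempty.1 hd
  set ω := (volume (Metric.ball (0 : EuclideanSpace ℝ (Fin d)) 1)).toReal with hωdef
  have hωpos : 0 < ω := ENNReal.toReal_pos
    (Metric.measure_ball_pos volume _ one_pos).ne' (measure_ball_lt_top).ne
  set K := c * ω * r ^ (d + 1) with hKdef
  have hKpos : 0 < K := by positivity
  set S := {x | x ∈ D ∧ 2 * r < Metric.infDist x Dᶜ ∧ 0 < w x} with hSdef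
  -- balls of radius r around points of S stay inside D
  have hball : ∀ x ∈ S, Metric.ball x r ⊆ D := by
    rintro x ⟨hxD, hxd, -⟩ y hy
    by_contra hyD
    have h1 : Metric.infDist x Dᶜ ≤ dist x y := Metric.infDist_le_dist_of_mem hyD
    rw [Metric.mem_ball, dist_comm] at hy
    linarith
  -- mass lower bound on each ball centered in S
  have hmass : ∀ x ∈ S, K < ∫ y in Metric.ball x r, w y := by
    intro x hx
    have hvol : (volume (Metric.ball x r)).toReal = r ^ d * ω := by
      rw [Measure.addHaar_ball volume x hr.le, finrank_euclideanSpace_fin,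
        ENNReal.toReal_mul, ENNReal.toReal_ofReal (by positivity)]
    by_contra hcon
    push_neg at hcon
    have hKeq : c * r * (volume (Metric.ball x r)).toReal = K := by
      rw [hvol, hKdef, pow_succ]; ring
    have h0 := hdens x hx.1 (hball x hx) (by rw [hKeq]; exact hcon) x
      (Metric.mem_ball_self (by linarith))
    exact absurd h0 (ne_of_gt hx.2.2)
  -- Zorn: maximal 2r-separated subset of S
  have hzorn : ∀ ch ⊆ {T : Set (EuclideanSpace ℝ (Fin d)) | T ⊆ S ∧
      T.Pairwise fun a b => 2 * r ≤ dist a b}, IsChain (· ⊆ ·) ch →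
      ∃ ub ∈ {T : Set (EuclideanSpace ℝ (Fin d)) | T ⊆ S ∧
        T.Pairwise fun a b => 2 * r ≤ dist a b}, ∀ s ∈ ch, s ⊆ ub := by
    intro ch hch hchain
    refine ⟨⋃₀ ch, ⟨?_, ?_⟩, fun s hs => subset_sUnion_of_mem hs⟩
    · exact sUnion_subset fun s hs => (hch hs).1
    · intro a ha b hb hab
      obtain ⟨s, hs, has⟩ := ha
      obtain ⟨t, ht, hbt⟩ := hb
      rcases hchain.total hs ht with h | h
      · exact (hch ht).2 (h has) hbt hab
      · exact (hch hs).2 has (h hbt) hab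
  obtain ⟨T, hTmem, hTmax⟩ := zorn_subset _ hzorn
  obtain ⟨hTS, hTsep⟩ := hTmem
  -- maximality: every point of S is within 2r of T
  have hcover : ∀ x ∈ S, ∃ t ∈ T, dist x t < 2 * r := by
    intro x hx
    by_contra hcon
    push_neg at hcon
    have hxT : x ∉ T := fun hxT => absurd (hcon x hxT) (by simp; positivity)
    have hins : insert x T ∈ {T : Set (EuclideanSpace ℝ (Fin d)) | T ⊆ S ∧
        T.Pairwise fun a b => 2 * r ≤ dist a b} := by
      refine ⟨insert_subset hx hTS, ?_⟩
      haveI : Std.Symm (fun a b : EuclideanSpace ℝ (Fin d) => 2 * r ≤ dist a b) :=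
        ⟨fun a b h => by rwa [dist_comm]⟩
      refine Set.pairwise_insert_of_symm |>.2 ⟨hTsep, ?_⟩
      intro t ht _
      exact hcon t ht
    have := hTmax hins (subset_insert x T)
    exact hxT (this (mem_insert x T))
  -- key counting claim
  have claim : ∀ F : Finset (EuclideanSpace ℝ (Fin d)), ↑F ⊆ T →
      (F.card : ℝ) * K ≤ ∫ x in D, w x := by
    intro F hF
    have hdisj : (F : Set (EuclideanSpace ℝ (Fin d))).Pairwise
        (Function.onFun Disjoint fun t => Metric.ball t r) := by
      intro a ha b hb hab
      exact Metric.ball_disjoint_ball (by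
        have := hTsep (hF ha) (hF hb) hab; linarith)
    have hmeas : ∀ t ∈ F, MeasurableSet (Metric.ball t r) := fun t _ => measurableSet_ball
    have hintF : ∀ t ∈ F, IntegrableOn w (Metric.ball t r) :=
      fun t ht => hint.mono_set (hball t (hTS (hF ht)))
    have h1 : ∑ t ∈ F, ∫ y in Metric.ball t r, w y
        = ∫ y in ⋃ t ∈ F, Metric.ball t r, w y :=
      (integral_biUnion_finset F hmeas hdisj hintF).symm
    have h2 : (∫ y in ⋃ t ∈ F, Metric.ball t r, w y) ≤ ∫ x in D, w x := by
      refine setIntegral_mono_set hint (Filter.Eventually.of_forall fun x => hw x) ?_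
      exact (Set.iUnion₂_subset fun t ht => hball t (hTS (hF ht))).eventuallyLE
    have h3 : (F.card : ℝ) * K ≤ ∑ t ∈ F, ∫ y in Metric.ball t r, w y := by
      have := Finset.card_nsmul_le_sum F (fun t => ∫ y in Metric.ball t r, w y) K
        (fun t ht => (hmass t (hTS (hF ht))).le)
      simpa [nsmul_eq_mul] using this
    linarith
  -- T is finite
  have hTfin : T.Finite := by
    by_contra hinf
    obtain ⟨F, hF, hcard⟩ := Set.Infinite.exists_subset_card_eq hinf (⌊(∫ x in D, w x) / K⌋₊ + 1)
    have h1 := claim F hF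
    have hle : (F.card : ℝ) ≤ (∫ x in D, w x) / K := by
      rw [le_div_iff₀ hKpos]; exact h1
    rw [hcard] at hle
    have h2 := Nat.lt_floor_add_one ((∫ x in D, w x) / K)
    push_cast at hle
    linarith
  refine ⟨hTfin.toFinset, ?_, ?_⟩
  · rw [le_div_iff₀ hKpos]
    exact claim hTfin.toFinset (by simp)
  · intro x hx
    obtain ⟨t, ht, hlt⟩ := hcover x hx
    exact Set.mem_biUnion (hTfin.mem_toFinset.2 ht) (Metric.mem_ball.2 hlt)
end
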